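/- Let α < 0, β < 0, j ≥ 1, λ₀ = j/√(αβ) and γ⁻(λ) = (−λ(α+β) − √(λ²(α−β)² + 4j²))/2. Then γ⁻(λ₀) = 0 and (γ⁻)'(λ₀) > 0; consequently for all sufficiently small ε > 0 with λ₀ − ε > 0, γ⁻(λ₀ − ε) < 0 < γ⁻(λ₀ + ε). -/

import Mathlib

private lemma stmt12_aux (α β t jj : ℝ) (ht : 0 < t) (hj : 0 < jj) (hsum : α + β < 0) :
    (-(α + β) - 2 * (jj/t) * (α - β) ^ 2 / (2 * (-jj * (α + β) / t))) / 2
      = -2 * α * β / (α + β) := by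
  have hd : (0:ℝ) < 2 * (-jj * (α + β) / t) := by
    have : 0 < -jj * (α + β) := by nlinarith
    positivity
  have h1 : 2 * (jj/t) * (α - β) ^ 2 / (2 * (-jj * (α + β) / t))
      = (α - β) ^ 2 / (-(α + β)) := by
    rw [div_eq_div_iff hd.ne' (neg_ne_zero.mpr hsum.ne)]
    field_simp
  rw [h1, div_neg, sub_neg_eq_add, div_eq_div_iff two_ne_zero hsum.ne]
  field_simp [hsum.ne]
  ring

set_option maxHeartbeats 1000000 in
theorem stmt12 (α β : ℝ) (hα : α < 0) (hβ : β < 0) (j : ℕ) (hj : 1 ≤ j)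
    (l₀ : ℝ) (hl₀ : l₀ = (j : ℝ) / Real.sqrt (α * β))
    (γ : ℝ → ℝ)
    (hγ : ∀ l : ℝ, γ l =
      (-l * (α + β) - Real.sqrt (l ^ 2 * (α - β) ^ 2 + 4 * (j : ℝ) ^ 2)) / 2) :
    γ l₀ = 0 ∧ 0 < deriv γ l₀ ∧
      ∃ ε₀ > 0, ∀ ε : ℝ, 0 < ε → ε < ε₀ → 0 < l₀ - ε →
        γ (l₀ - ε) < 0 ∧ 0 < γ (l₀ + ε) := by
  have hab : 0 < α * β := mul_pos_of_neg_of_neg hα hβ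
  have hs0 : 0 < Real.sqrt (α * β) := Real.sqrt_pos.mpr hab
  have hs2 : Real.sqrt (α * β) ^ 2 = α * β := Real.sq_sqrt hab.le
  have hjpos : (0:ℝ) < j := by exact_mod_cast hj
  have hl0pos : 0 < l₀ := by rw [hl₀]; positivity
  have hsum : α + β < 0 := by linarith
  have hl0sq : l₀ ^ 2 * (α * β) = (j:ℝ) ^ 2 := by
    rw [hl₀, div_pow, hs2]; field_simp; exact div_self hab.ne'
  -- sign lemmas
  have hneg : ∀ l : ℝ, 0 ≤ l → l < l₀ → γ l < 0 := by
    intro l hl hll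
    rw [hγ]
    have hA : 0 ≤ -l * (α + β) := by nlinarith
    have h2 : l ^ 2 < l₀ ^ 2 := by nlinarith
    have h3 : l ^ 2 * (α * β) < l₀ ^ 2 * (α * β) := by nlinarith
    have hlt : -l * (α + β) < Real.sqrt (l ^ 2 * (α - β) ^ 2 + 4 * (j:ℝ) ^ 2) := by
      rw [Real.lt_sqrt hA]
      nlinarith [h3, hl0sq]
    linarith
  have hpos : ∀ l : ℝ, l₀ < l → 0 < γ l := by
    intro l hll
    rw [hγ]
    have hA : 0 < -l * (α + β) := by nlinarith
    have h2 : l₀ ^ 2 < l ^ 2 := by nlinarith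
    have h3 : l₀ ^ 2 * (α * β) < l ^ 2 * (α * β) := by nlinarith
    have hlt : Real.sqrt (l ^ 2 * (α - β) ^ 2 + 4 * (j:ℝ) ^ 2) < -l * (α + β) := by
      rw [Real.sqrt_lt' hA]
      nlinarith [h3, hl0sq]
    linarith
  -- value at l₀
  have hval : γ l₀ = 0 := by
    rw [hγ]
    have heq : l₀ ^ 2 * (α - β) ^ 2 + 4 * (j:ℝ) ^ 2 = (-l₀ * (α + β)) ^ 2 := by
      linear_combination -4 * hl0sq
    rw [heq, Real.sqrt_sq (by nlinarith)]
    ring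
  -- derivative
  have hfpos : 0 < l₀ ^ 2 * (α - β) ^ 2 + 4 * (j:ℝ) ^ 2 := by positivity
  have hf : HasDerivAt (fun l : ℝ => l ^ 2 * (α - β) ^ 2 + 4 * (j:ℝ) ^ 2)
      (2 * l₀ * (α - β) ^ 2) l₀ := by
    have h1 : HasDerivAt (fun l : ℝ => l ^ 2) (2 * l₀) l₀ := by
      simpa using hasDerivAt_pow 2 l₀
    simpa using (h1.mul_const ((α - β) ^ 2)).add_const (4 * (j:ℝ) ^ 2)
  have hsq := hf.sqrt hfpos.ne'
  have hlin : HasDerivAt (fun l : ℝ => -l * (α + β)) (-(α + β)) l₀ := by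
    simpa using ((hasDerivAt_id l₀).neg.mul_const (α + β))
  have hγeq : γ = fun l : ℝ =>
      (-l * (α + β) - Real.sqrt (l ^ 2 * (α - β) ^ 2 + 4 * (j:ℝ) ^ 2)) / 2 :=
    funext hγ
  have hD : HasDerivAt γ
      ((-(α + β) - 2 * l₀ * (α - β) ^ 2 /
        (2 * Real.sqrt (l₀ ^ 2 * (α - β) ^ 2 + 4 * (j:ℝ) ^ 2))) / 2) l₀ := by
    rw [hγeq]
    exact (hlin.sub hsq).div_const 2
  have hSval : Real.sqrt (l₀ ^ 2 * (α - β) ^ 2 + 4 * (j:ℝ) ^ 2)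
      = -(j:ℝ) * (α + β) / Real.sqrt (α * β) := by
    have heq : l₀ ^ 2 * (α - β) ^ 2 + 4 * (j:ℝ) ^ 2
        = (-(j:ℝ) * (α + β) / Real.sqrt (α * β)) ^ 2 := by
      rw [div_pow, hs2]
      rw [eq_div_iff hab.ne']
      linear_combination (α - β) ^ 2 * hl0sq
    rw [heq, Real.sqrt_sq (div_nonneg (by nlinarith) hs0.le)]
  have hDval : (-(α + β) - 2 * l₀ * (α - β) ^ 2 /
        (2 * Real.sqrt (l₀ ^ 2 * (α - β) ^ 2 + 4 * (j:ℝ) ^ 2))) / 2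
      = -2 * α * β / (α + β) := by
    rw [hSval, hl₀]
    exact stmt12_aux α β (Real.sqrt (α*β)) (j:ℝ) hs0 hjpos hsum
  have hderiv : 0 < deriv γ l₀ := by
    rw [hD.deriv, hDval, div_pos_iff]
    right
    exact ⟨by nlinarith, hsum⟩
  refine ⟨hval, hderiv, 1, one_pos, fun ε hε hε1 hlε => ?_⟩
  exact ⟨hneg (l₀ - ε) hlε.le (by linarith), hpos (l₀ + ε) (by linarith)⟩
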